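/- Structure of high-weight solutions in the kSUM reduction: let x_1,…,x_h be positive integers, T = Σ_{i=1}^h x_i, and k, B positive integers with 1 ≤ k < h and B < T. Consider the two-machine JIT flow-shop instance with kh+1 jobs: for each i ∈ {1,…,k}, j ∈ {1,…,h} a job J_{ij} with p^(1)_{ij} = x_j, p^(2)_{ij} = 1, w_{ij} = T + x_j, d_{ij} = iT; and a job J_{kh+1} with p^(1)_{kh+1} = (k+1)T − B, p^(2)_{kh+1} = 1, w_{kh+1} = k²(T+1)², d_{kh+1} = (k+1)T + 1. Then every feasible set E with Σ_{j∈E} w_j ≥ kT + B + k²(T+1)² satisfies: J_{kh+1} ∈ E; the set E' = E ∖ {J_{kh+1}} contains exactly k jobs, at most one job J_{ij} for each i; and Σ_{J_{ij}∈E'} x_j = B. -/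

import Mathlib

open Finset

/-- A just-in-time flow-shop instance on `m` machines with jobs of type `J`:
`p i j` is the (positive integer) processing time of job `j` on machine `i`,
`d j` its positive integer due date and `w j` its positive integer weight. -/
structure JITInstance (m : ℕ) (J : Type) where
  p : Fin m → J → ℕ
  d : J → ℕ
  w : J → ℕ
  p_pos : ∀ i j, 0 < p i j
  d_pos : ∀ j, 0 < d j
  w_pos : ∀ j, 0 < w j

/-- `S` is a JIT schedule of the job set `E`: on every machine the processing
intervals `(S i j, S i j + p i j]` of distinct jobs of `E` are pairwise disjoint,
each job's operation on machine `i+1` starts no earlier than its completion on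
machine `i`, and every job of `E` completes on the last machine exactly at its
due date.  (Start times are nonnegative automatically, being naturals.) -/
def IsJITSchedule {m : ℕ} {J : Type} (I : JITInstance m J)
    (E : Finset J) (S : Fin m → J → ℕ) : Prop :=
  (∀ i : Fin m, ∀ j ∈ E, ∀ j' ∈ E, j ≠ j' →
      S i j + I.p i j ≤ S i j' ∨ S i j' + I.p i j' ≤ S i j) ∧
  (∀ j ∈ E, ∀ i i' : Fin m, i'.val = i.val + 1 →
      S i j + I.p i j ≤ S i' j) ∧
  (∀ j ∈ E, ∀ i : Fin m, i.val = m - 1 →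
      S i j + I.p i j = I.d j)

/-- A job set is feasible if it admits a JIT schedule. -/
def Feasible {m : ℕ} {J : Type} (I : JITInstance m J) (E : Finset J) : Prop :=
  ∃ S : Fin m → J → ℕ, IsJITSchedule I E S

/-- The two-machine JIT flow-shop instance constructed in the kSUM reduction:
for each `i ∈ {1,…,k}`, `j ∈ {1,…,h}` a job `J_{ij}` (encoded `Sum.inl (i, j)`,
0-indexed) with `p¹ = x j`, `p² = 1`, `w = T + x j`, `d = iT`, and one extra
job `J_{kh+1}` (encoded `Sum.inr ()`) with `p¹ = (k+1)T - B`, `p² = 1`,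
`w = k²(T+1)²`, `d = (k+1)T + 1`, where `T = ∑ i, x i`. -/
def ksumInstance2 (h k B : ℕ) (x : Fin h → ℕ) (hx : ∀ i, 0 < x i)
    (hk : 1 ≤ k) (hB : 0 < B) (hBT : B < ∑ i, x i) :
    JITInstance 2 (Fin k × Fin h ⊕ Unit) where
  p := fun i jb =>
    if i.val = 0 then
      Sum.elim (fun q => x q.2) (fun _ => (k + 1) * (∑ i, x i) - B) jb
    else 1
  d := Sum.elim (fun q => (q.1.val + 1) * (∑ i, x i))
    (fun _ => (k + 1) * (∑ i, x i) + 1)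
  w := Sum.elim (fun q => (∑ i, x i) + x q.2)
    (fun _ => k ^ 2 * ((∑ i, x i) + 1) ^ 2)
  p_pos := by
    intro i jb
    try dsimp only
    split
    · rcases jb with ⟨a, j⟩ | u
      · simpa using hx j
      · simp only [Sum.elim_inr]
        have h1 : (∑ i, x i) ≤ (k + 1) * (∑ i, x i) :=
          Nat.le_mul_of_pos_left _ (by omega)
        omega
    · exact one_pos
  d_pos := by
    rintro (⟨a, j⟩ | u)
    · simp only [Sum.elim_inl]
      exact Nat.mul_pos (by omega) (by omega)
    · simp only [Sum.elim_inr]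
      omega
  w_pos := by
    rintro (⟨a, j⟩ | u)
    · simp only [Sum.elim_inl]
      have := hx j
      omega
    · simp only [Sum.elim_inr]
      exact Nat.mul_pos (pow_pos (by omega : 0 < k) 2)
        (pow_pos (by omega : 0 < (∑ i, x i) + 1) 2)

/-- structure of high-weight solutions in the kSUM reduction.
Every feasible set `E` of weight at least `kT + B + k²(T+1)²` contains the job
`J_{kh+1}`; the set `E' = E \ {J_{kh+1}}` has exactly `k` jobs, at most one job
`J_{ij}` for each `i`; and the `x`-values of the jobs of `E'` sum to `B`. -/
theorem ksum_two_machines_structure (h k B : ℕ) (x : Fin h → ℕ)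
    (hx : ∀ i, 0 < x i) (hk : 1 ≤ k) (hkh : k < h) (hB : 0 < B)
    (hBT : B < ∑ i, x i)
    (E : Finset (Fin k × Fin h ⊕ Unit))
    (hfeas : Feasible (ksumInstance2 h k B x hx hk hB hBT) E)
    (hwt : k * (∑ i, x i) + B + k ^ 2 * ((∑ i, x i) + 1) ^ 2
      ≤ ∑ jb ∈ E, (ksumInstance2 h k B x hx hk hB hBT).w jb) :
    Sum.inr () ∈ E ∧
    (E.erase (Sum.inr ())).card = k ∧
    (∀ i : Fin k, ∀ j j' : Fin h,
      Sum.inl (i, j) ∈ E.erase (Sum.inr ()) →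
      Sum.inl (i, j') ∈ E.erase (Sum.inr ()) → j = j') ∧
    ∑ jb ∈ E.erase (Sum.inr ()),
        (match jb with | Sum.inl (_, j) => x j | Sum.inr _ => 0) = B := by
  classical
  obtain ⟨S, hdisj, hord, hdue⟩ := hfeas
  set T := ∑ i, x i with hT
  have hT0 : 0 < T := lt_of_le_of_lt (Nat.zero_le B) hBT
  have hxT : ∀ j : Fin h, x j ≤ T := by
    intro j; rw [hT]; exact Finset.single_le_sum (fun i _ => Nat.zero_le _) (mem_univ j)
  have hp0l : ∀ (a : Fin k) (j : Fin h),
      (ksumInstance2 h k B x hx hk hB hBT).p 0 (Sum.inl (a, j)) = x j := fun _ _ => rfl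
  have hp0r : (ksumInstance2 h k B x hx hk hB hBT).p 0 (Sum.inr ()) = (k+1)*T - B := rfl
  have hp1 : ∀ jb, (ksumInstance2 h k B x hx hk hB hBT).p 1 jb = 1 := fun _ => rfl
  have hdl : ∀ (a : Fin k) (j : Fin h),
      (ksumInstance2 h k B x hx hk hB hBT).d (Sum.inl (a, j)) = (a.val+1)*T := fun _ _ => rfl
  have hdr : (ksumInstance2 h k B x hx hk hB hBT).d (Sum.inr ()) = (k+1)*T + 1 := rfl
  have hwl : ∀ (a : Fin k) (j : Fin h),
      (ksumInstance2 h k B x hx hk hB hBT).w (Sum.inl (a, j)) = T + x j := fun _ _ => rfl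
  have hwr : (ksumInstance2 h k B x hx hk hB hBT).w (Sum.inr ()) = k^2*(T+1)^2 := rfl
  -- at most one job per row
  have hrow : ∀ (a : Fin k) (j j' : Fin h), Sum.inl (a, j) ∈ E → Sum.inl (a, j') ∈ E → j = j' := by
    intro a j j' hj hj'
    by_contra hne
    have hne' : (Sum.inl (a, j) : Fin k × Fin h ⊕ Unit) ≠ Sum.inl (a, j') := by
      simp [hne]
    have h1 := hdue _ hj 1 rfl
    have h2 := hdue _ hj' 1 rfl
    rw [hp1, hdl] at h1 h2
    have h3 : S 1 (Sum.inl (a, j)) + 1 = S 1 (Sum.inl (a, j')) + 1 := h1.trans h2.symm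
    have h4 := hdisj 1 _ hj _ hj' hne'
    rw [hp1, hp1] at h4
    omega
  have hE'mem : ∀ jb ∈ E.erase (Sum.inr ()), ∃ (a : Fin k) (j : Fin h), jb = Sum.inl (a, j) := by
    intro jb hjb
    rcases jb with ⟨a, j⟩ | u
    · exact ⟨a, j, rfl⟩
    · cases u; exact absurd rfl (Finset.mem_erase.1 hjb).1
  have hcard : (E.erase (Sum.inr ())).card ≤ k := by
    have hinj : (E.erase (Sum.inr ())).card ≤ (Finset.univ : Finset (Fin k)).card := by
      apply Finset.card_le_card_of_injOn (fun jb => match jb with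
        | Sum.inl (a, _) => a
        | Sum.inr _ => (⟨0, hk⟩ : Fin k))
      · intro jb _; exact mem_univ _
      · intro jb hjb jb' hjb' heq
        obtain ⟨a, j, rfl⟩ := hE'mem jb hjb
        obtain ⟨a', j', rfl⟩ := hE'mem jb' hjb'
        simp only at heq
        subst heq
        have := hrow a j j' (Finset.mem_of_mem_erase hjb) (Finset.mem_of_mem_erase hjb')
        subst this
        rfl
    simpa using hinj
  -- key arithmetic fact
  have hW : k * T < k^2 * (T+1)^2 := by nlinarith [hk, hT0]
  -- the big job is in E
  have hinrE : Sum.inr () ∈ E := by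
    by_contra hinr
    have hEeq : E.erase (Sum.inr ()) = E := Finset.erase_eq_of_notMem hinr
    have hle1 : ∑ jb ∈ E, (ksumInstance2 h k B x hx hk hB hBT).w jb ≤ ∑ _jb ∈ E, 2 * T := by
      apply Finset.sum_le_sum
      intro jb hjb
      obtain ⟨a, j, rfl⟩ := hE'mem jb (hEeq.symm ▸ hjb)
      rw [hwl]
      have := hxT j
      omega
    rw [Finset.sum_const, smul_eq_mul] at hle1
    have hcardE : E.card ≤ k := hEeq ▸ hcard
    have hle2 : E.card * (2 * T) ≤ k * (2 * T) := Nat.mul_le_mul_right _ hcardE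
    have hfin : k * T + B + k^2*(T+1)^2 ≤ k * (2 * T) := le_trans hwt (le_trans hle1 hle2)
    nlinarith [hfin, hW, hB]
  -- start time of big job on machine 1 is at most B
  have hBle : B ≤ (k+1)*T := by
    have h1 : T ≤ (k+1)*T := Nat.le_mul_of_pos_left T (by omega)
    omega
  have hPB : (ksumInstance2 h k B x hx hk hB hBT).p 0 (Sum.inr ()) + B = (k+1)*T := by
    rw [hp0r]; exact Nat.sub_add_cancel hBle
  have hS1r : S 1 (Sum.inr ()) + 1 = (k+1)*T + 1 := by
    have := hdue _ hinrE 1 rfl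
    rwa [hp1, hdr] at this
  have hS0r : S 0 (Sum.inr ()) ≤ B := by
    have h1 := hord _ hinrE 0 1 rfl
    have h2 : S 0 (Sum.inr ()) + (ksumInstance2 h k B x hx hk hB hBT).p 0 (Sum.inr ())
        ≤ (k+1)*T := by omega
    linarith [hPB, h2]
  -- every small job's machine-1 interval ends before the big job's start
  have hend : ∀ (a : Fin k) (j : Fin h), Sum.inl (a, j) ∈ E →
      S 0 (Sum.inl (a, j)) + x j ≤ S 0 (Sum.inr ()) := by
    intro a j hj
    have h1 := hord _ hj 0 1 rfl
    rw [hp0l] at h1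
    have h2 := hdue _ hj 1 rfl
    rw [hp1, hdl] at h2
    have h3 : (a.val+1)*T ≤ k*T := Nat.mul_le_mul_right T (by omega)
    have h2' : S 0 (Sum.inl (a, j)) + x j + 1 ≤ k * T := by linarith
    have hne' : (Sum.inl (a, j) : Fin k × Fin h ⊕ Unit) ≠ Sum.inr () := by simp
    have hd0 := hdisj 0 _ hj _ hinrE hne'
    rw [hp0l] at hd0
    rcases hd0 with hd0 | hd0
    · exact hd0
    · -- impossible: big job's machine-1 interval ends after kT
      have hM : (k+1)*T = k*T + T := by ring
      linarith [hPB, hd0, h2', hBT]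
  -- the x-values of E' sum to at most B (interval packing in (0, B])
  set E' := E.erase (Sum.inr ()) with hE'
  have hsum_le : ∑ jb ∈ E', (match jb with | Sum.inl (_, j) => x j | Sum.inr _ => 0) ≤ B := by
    set F : (Fin k × Fin h ⊕ Unit) → Finset ℕ := fun jb =>
      Finset.Ioc (S 0 jb) (S 0 jb + (match jb with | Sum.inl (_, j) => x j | Sum.inr _ => 0))
      with hF
    have hdisjF : ∀ jb ∈ E', ∀ jb' ∈ E', jb ≠ jb' → Disjoint (F jb) (F jb') := by
      intro jb hjb jb' hjb' hne
      obtain ⟨a, j, rfl⟩ := hE'mem jb hjb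
      obtain ⟨a', j', rfl⟩ := hE'mem jb' hjb'
      have hd0 := hdisj 0 _ (Finset.mem_of_mem_erase hjb) _ (Finset.mem_of_mem_erase hjb') hne
      rw [hp0l, hp0l] at hd0
      rw [Finset.disjoint_left]
      intro t ht ht'
      simp only [hF, Finset.mem_Ioc] at ht ht'
      omega
    have hcardF : ∑ jb ∈ E', (match jb with | Sum.inl (_, j) => x j | Sum.inr _ => 0)
        = (E'.biUnion F).card := by
      rw [Finset.card_biUnion hdisjF]
      apply Finset.sum_congr rfl
      intro jb _
      rw [hF]
      simp [Nat.card_Ioc]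
    rw [hcardF]
    have hsub : E'.biUnion F ⊆ Finset.Ioc 0 B := by
      intro t ht
      rw [Finset.mem_biUnion] at ht
      obtain ⟨jb, hjb, ht⟩ := ht
      obtain ⟨a, j, rfl⟩ := hE'mem jb hjb
      have h1 := hend a j (Finset.mem_of_mem_erase hjb)
      simp only [hF, Finset.mem_Ioc] at ht ⊢
      omega
    calc (E'.biUnion F).card ≤ (Finset.Ioc 0 B).card := Finset.card_le_card hsub
      _ = B := by simp
  -- weight decomposition
  rw [← Finset.add_sum_erase E _ hinrE, hwr] at hwt
  have hwE' : ∑ jb ∈ E', (ksumInstance2 h k B x hx hk hB hBT).w jb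
      = E'.card * T + ∑ jb ∈ E', (match jb with | Sum.inl (_, j) => x j | Sum.inr _ => 0) := by
    have hc : ∀ jb ∈ E', (ksumInstance2 h k B x hx hk hB hBT).w jb
        = T + (match jb with | Sum.inl (_, j) => x j | Sum.inr _ => 0) := by
      intro jb hjb
      obtain ⟨a, j, rfl⟩ := hE'mem jb hjb
      rw [hwl]
    rw [Finset.sum_congr rfl hc, Finset.sum_add_distrib, Finset.sum_const, smul_eq_mul]
  rw [hwE'] at hwt
  have hmul : E'.card * T ≤ k * T := Nat.mul_le_mul_right T hcard
  have hcards : E'.card * T = k * T := by linarith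
  have hcardk : E'.card = k := Nat.eq_of_mul_eq_mul_right hT0 hcards
  have hsumB : ∑ jb ∈ E', (match jb with | Sum.inl (_, j) => x j | Sum.inr _ => 0) = B := by
    have : B ≤ ∑ jb ∈ E', (match jb with | Sum.inl (_, j) => x j | Sum.inr _ => 0) := by
      linarith
    omega
  exact ⟨hinrE, hcardk,
    fun i j j' hj hj' => hrow i j j' (Finset.mem_of_mem_erase hj) (Finset.mem_of_mem_erase hj'),
    hsumB⟩
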